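/- Let G be a group acting on a metric space M (action Φ) and let p ∈ M be a fixed point of Φ. Then for every δ > 0, every y ∈ M with d(p, y) < δ, and the constant map h : G → G, h(g) = e, one has d(Φ(g, p), Φ(h(g), y)) = d(p, y) < δ for all g ∈ G. Consequently, if Φ is expansive in the Bowen–Walters sense with parameters (ε, δ) and p is fixed, then the open ball B_δ(p) is contained in {Φ(g₀, p) : |g₀| < ε} = {p}, so B_δ(p) = {p}; hence if M is connected with more than one point, Φ has no fixed point. -/

import Mathlib

/-- At a fixed point `p` of an action, the constant-identity
reparametrization keeps nearby points uniformly close; consequently, for a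
Bowen–Walters expansive action the δ-ball around any fixed point is `{p}`,
and hence a connected space with more than one point admits no fixed point. -/
theorem stmt_18 {G M : Type*} [Group G] [MetricSpace G] [IsTopologicalGroup G]
    [MetricSpace M]
    (hinv : ∀ a b c : G, dist (a * c) (b * c) = dist a b)
    (Φ : G → M → M)
    (hΦ1 : ∀ x, Φ 1 x = x) (hΦm : ∀ g h x, Φ (g * h) x = Φ g (Φ h x))
    (hΦc : Continuous fun p : G × M => Φ p.1 p.2)
    (hexp : ∀ ε > (0 : ℝ), ∃ δ > (0 : ℝ), ∀ x y : M, ∀ h : G → G,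
      Continuous h → h 1 = 1 →
      (∀ g : G, dist (Φ g x) (Φ (h g) y) < δ) →
      ∃ g₀ : G, dist g₀ 1 < ε ∧ y = Φ g₀ x) :
    (∀ (p : M), (∀ g : G, Φ g p = p) →
      ∀ (δ : ℝ) (y : M), dist p y < δ →
        ∀ g : G, dist (Φ g p) (Φ ((fun _ : G => (1 : G)) g) y) = dist p y ∧
          dist (Φ g p) (Φ ((fun _ : G => (1 : G)) g) y) < δ) ∧
    (∀ ε > (0 : ℝ), ∃ δ > (0 : ℝ), ∀ p : M, (∀ g : G, Φ g p = p) →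
      Metric.ball p δ = {p}) ∧
    (ConnectedSpace M → (∃ a b : M, a ≠ b) → ¬ ∃ p : M, ∀ g : G, Φ g p = p) := by
  have key : ∀ ε > (0 : ℝ), ∃ δ > (0 : ℝ), ∀ p : M, (∀ g : G, Φ g p = p) →
      Metric.ball p δ = {p} := by
    intro ε hε
    obtain ⟨δ, hδ, hprop⟩ := hexp ε hε
    refine ⟨δ, hδ, fun p hp => ?_⟩
    ext y
    simp only [Metric.mem_ball, Set.mem_singleton_iff]
    constructor
    · intro hy
      obtain ⟨g₀, _, hy0⟩ := hprop p y (fun _ => 1) continuous_const rfl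
        (fun g => by rw [hp g, hΦ1]; rw [dist_comm]; exact hy)
      rw [hy0, hp g₀]
    · rintro rfl; simpa using hδ
  refine ⟨fun p hp δ y hy g => by rw [hp g, hΦ1]; exact ⟨rfl, hy⟩, key, ?_⟩
  rintro hconn ⟨a, b, hab⟩ ⟨p, hp⟩
  obtain ⟨δ, hδ, hball⟩ := key 1 one_pos
  have hopen : IsOpen ({p} : Set M) := hball p hp ▸ Metric.isOpen_ball
  have : ({p} : Set M) = Set.univ :=
    (isClopen_iff.mp ⟨isClosed_singleton, hopen⟩).resolve_left
      (Set.singleton_ne_empty p)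
  have ha : a = p := by have := this.symm ▸ Set.mem_univ a; exact this
  have hb : b = p := by have := this.symm ▸ Set.mem_univ b; exact this
  exact hab (ha.trans hb.symm)
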